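/- Composite lifts: for well-defined n-diagrams S, T, A, B, C with S, T globular and A, C globular, and well-defined embeddings e : S ↪ A and f : C ↪ B, the lift of the composite equals the composite of the lifts: Λ(Λ(f,A) ∘ e, T) = Λ(f, A⟨e : S → T⟩) ∘ Λ(e, T). -/

import Mathlib

/-!
Data structures for quasistrict higher categories (Bar–Vicary).
A 0-diagram is a single generator; an (n+1)-diagram is a source n-diagram
together with a list of cells, each a generator name with embedding data.
Embedding data between n-diagrams is a list of n heights; composition of
embeddings adds heights at every level, and the lifted embedding `Λ(e,T)`
has the same data as `e`.
-/

namespace QS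

inductive Diagram : Type where
  | base (g : ℕ) : Diagram
  | step (s : Diagram) (c : List (ℕ × List ℕ)) : Diagram

namespace Diagram

/-- Dimension of a diagram. -/
def dim : Diagram → ℕ
  | base _ => 0
  | step s _ => s.dim + 1

/-- The source (n−1)-diagram of an n-diagram (junk at dimension 0). -/
def src : Diagram → Diagram
  | base g => base g
  | step s _ => s

/-- The list of cells: generator names with embedding data. -/
def cells : Diagram → List (ℕ × List ℕ)
  | base _ => []
  | step _ c => c

/-- The length `|D|` of a diagram. -/
def size : Diagram → ℕ
  | base _ => 1
  | step _ c => c.length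

/-- The unique generator of a 0-diagram. -/
def gen : Diagram → ℕ
  | base g => g
  | step _ _ => 0

end Diagram

/-- A signature assigns to each generator name of each dimension `k ≥ 1` a
source and a target (k−1)-diagram. -/
structure Signature where
  gsrc : ℕ → ℕ → Diagram
  gtgt : ℕ → ℕ → Diagram

/-- Data of the composite embedding `f ∘ e`: `(f ∘ e).h = e.h + f.h`
recursively at every level, i.e. pointwise addition of height data. -/
def embComp (f e : List ℕ) : List ℕ := List.zipWith (· + ·) f e

/-- Data of the lifted embedding `Λ(e, T) : T ↪ D⟨e : S → T⟩`: the same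
height data as `e` (`Λ(e,T).h = e.h`, `Λ(e,T).e = e.e`). -/
def liftEmb (e : List ℕ) (_T : Diagram) : List ℕ := e

/-- Data of the identity embedding on an n-diagram: height 0 at every level. -/
def idEmb (n : ℕ) : List ℕ := List.replicate n 0

/-- The rewrite `D⟨e : S → T⟩`: remove the copy of `S` embedded at height
`e.h` and insert `T`, with the embeddings of `T` composed with the lift of
`e.e`. -/
def rewriteDiag (D : Diagram) (e : List ℕ) (S T : Diagram) : Diagram :=
  match D with
  | .base _ => T
  | .step s c =>
      .step s (c.take (e.headD 0)
        ++ T.cells.map (fun x => (x.1, embComp (liftEmb e.tail T) x.2))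
        ++ c.drop (e.headD 0 + S.cells.length))

/-- The slice `D[i].d`, obtained by sequential rewriting from the source. -/
def slice (σ : Signature) (D : Diagram) : ℕ → Diagram
  | 0 => D.src
  | i + 1 =>
      rewriteDiag (slice σ D i) (D.cells.getD i default).2
        (σ.gsrc D.dim (D.cells.getD i default).1)
        (σ.gtgt D.dim (D.cells.getD i default).1)

/-- The target `D.t := D[|D|].d`. -/
def tgt (σ : Signature) (D : Diagram) : Diagram := slice σ D D.cells.length

/-- Iterated source `s^k`. -/
def srcIter : ℕ → Diagram → Diagram
  | 0, D => D
  | k + 1, D => srcIter k D.src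

/-- Iterated target `t^k`. -/
def tgtIter (σ : Signature) : ℕ → Diagram → Diagram
  | 0, D => D
  | k + 1, D => tgtIter σ k (tgt σ D)

/-- Well-definedness of an embedding `e : S ↪ D`: for 0-diagrams the unique
generators agree; otherwise the component embedding is well-defined, the
image is in range, and the generators and embeddings of `S` match those of
`D` at heights shifted by `e.h` (via the lift of `e.e`). -/
def wdEmb (σ : Signature) : List ℕ → Diagram → Diagram → Prop
  | e, .base g, D => e = [] ∧ D.gen = g
  | e, .step Ss Sc, D =>
      e.length = Ss.dim + 1 ∧
      e.headD 0 + Sc.length ≤ D.cells.length ∧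
      wdEmb σ e.tail Ss (slice σ D (e.headD 0)) ∧
      ∀ i < Sc.length,
        (Sc.getD i default).1 = (D.cells.getD (i + e.headD 0) default).1 ∧
        embComp e.tail (Sc.getD i default).2
          = (D.cells.getD (i + e.headD 0) default).2

/-- Auxiliary well-definedness predicate for diagrams, by dimension. -/
def wdAux (σ : Signature) : ℕ → Diagram → Prop
  | 0, _ => True
  | n + 1, D =>
      wdAux σ n D.src ∧
      ∀ i < D.cells.length,
        wdEmb σ (D.cells.getD i default).2
          (σ.gsrc (n + 1) (D.cells.getD i default).1) (slice σ D i) ∧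
        wdAux σ n (slice σ D (i + 1))

/-- Well-definedness of a diagram: the source is well-defined and every
slice exists and is well-defined. -/
def wdDiagram (σ : Signature) (D : Diagram) : Prop := wdAux σ D.dim D

/-- Two n-diagrams are globular when n = 0, or they have equal sources and
equal targets. -/
def globular (σ : Signature) (S T : Diagram) : Prop :=
  match S with
  | .base _ => True
  | .step _ _ => S.src = T.src ∧ tgt σ S = tgt σ T

/-- Vertical composite of two n-diagrams (`S` below `D`): the source of `S`
together with the concatenated cell lists. -/
def vcomp (S D : Diagram) : Diagram :=
  match S with
  | .base g => .base g
  | .step s c => .step s (c ++ D.cells)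

/-- Data of the inclusion embedding `inc(S, D) : D ↪ S ∘ D` of an n-diagram
`D` into its composite with an m-diagram `S` of size `sLen`, `m ≤ n`. -/
def incData (m sLen : ℕ) : ℕ → List ℕ
  | 0 => []
  | k + 1 => if m = k + 1 then sLen :: List.replicate k 0
             else 0 :: incData m sLen k

/-- Composite `S ∘ D` where `S` has dimension ≤ that of `D`: `S` is attached
on the source side of the shared boundary, so the embeddings of the cells of
`D` are composed with the inclusion embeddings. -/
def compL (S D : Diagram) : Diagram :=
  match D with
  | .base g => .base g
  | .step s c =>
      if S.dim = s.dim + 1 then vcomp S D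
      else .step (compL S s)
        (c.map fun x => (x.1, embComp (incData S.dim S.size s.dim) x.2))

/-- Composite `D ∘ X` where `X` has dimension ≤ that of `D`: `X` is attached
on the target side of the shared boundary, so the cell data of `D` is
unchanged and only the deep source changes. -/
def compR (D X : Diagram) : Diagram :=
  match D with
  | .base g => .base g
  | .step s c =>
      if X.dim = s.dim + 1 then vcomp D X
      else .step (compR s X) c

/-- The composite `X ∘ Y` of two diagrams along their unique common
boundary, determined by their dimensions. -/
def comp (X Y : Diagram) : Diagram :=
  if X.dim ≤ Y.dim then compL X Y else compR X Y

/-- The identity (n+1)-diagram on an n-diagram: source `D`, no cells. -/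
def idDiag (D : Diagram) : Diagram := .step D []

/-- Composability of `X ∘ Y`: the matching condition on iterated
sources/targets along the shared boundary. -/
def composable (σ : Signature) (X Y : Diagram) : Prop :=
  if X.dim ≤ Y.dim then tgt σ X = srcIter (Y.dim - X.dim + 1) Y
  else tgtIter σ (X.dim - Y.dim + 1) X = Y.src

private lemma zipWith_add_assoc (f e x : List ℕ) :
    List.zipWith (· + ·) f (List.zipWith (· + ·) e x)
      = List.zipWith (· + ·) (List.zipWith (· + ·) f e) x := by
  induction f generalizing e x with
  | nil => simp
  | cons a f ih =>
    cases e with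
    | nil => simp
    | cons b e =>
      cases x with
      | nil => simp
      | cons c x => simp [ih, Nat.add_assoc]

private lemma take_mid_drop {α : Type*} (P Q R M : List α) (a sl : ℕ)
    (hQ : a + sl ≤ Q.length) :
    (P ++ Q ++ R).take (P.length + a) ++ M ++ (P ++ Q ++ R).drop (P.length + a + sl)
      = P ++ (Q.take a ++ M ++ Q.drop (a + sl)) ++ R := by
  rw [List.append_assoc P Q R, List.take_append,
    show P.length + a + sl = P.length + (a + sl) from by omega, List.drop_append,
    List.take_append_of_le_length (by omega),
    List.drop_append]
  simp only [Nat.add_sub_cancel_left]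
  rw [Nat.sub_eq_zero_of_le hQ, List.drop_zero]
  rw [List.take_of_length_le (by omega), List.drop_of_length_le (by omega)]
  simp

/-- **Composite lifts.**  For well-defined n-diagrams `S, T, A, B, C` with
`S, T` globular and `A, C` globular, and well-defined embeddings `e : S ↪ A`
and `f : C ↪ B`, the lift of the composite equals the composite of the
lifts: `Λ(Λ(f,A) ∘ e, T) = Λ(f, A⟨e : S → T⟩) ∘ Λ(e, T)`.  (Equivalence of
embeddings is componentwise: the codomains agree and the height data
agrees.) -/
theorem liftEmb_comp (σ : Signature) (S T A B C : Diagram) (e f : List ℕ)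
    (hSdim : S.dim = A.dim) (hTdim : T.dim = A.dim)
    (hBdim : B.dim = A.dim) (hCdim : C.dim = A.dim)
    (hS : wdDiagram σ S) (hT : wdDiagram σ T) (hA : wdDiagram σ A)
    (hB : wdDiagram σ B) (hC : wdDiagram σ C)
    (hST : globular σ S T) (hAC : globular σ A C)
    (he : wdEmb σ e S A) (hf : wdEmb σ f C B) :
    rewriteDiag (rewriteDiag B f C A) (embComp (liftEmb f A) e) S T
        = rewriteDiag B f C (rewriteDiag A e S T) ∧
      liftEmb (embComp (liftEmb f A) e) T
        = embComp (liftEmb f (rewriteDiag A e S T)) (liftEmb e T) := by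
  refine ⟨?_, rfl⟩
  cases B with
  | base gB =>
    cases A with
    | base gA => simp [rewriteDiag]
    | step As Ac => simp [Diagram.dim] at hBdim
  | step Bs Bc =>
    cases A with
    | base gA => simp [Diagram.dim] at hBdim
    | step As Ac =>
      cases S with
      | base _ => simp [Diagram.dim] at hSdim
      | step Ss Sc =>
        cases C with
        | base _ => simp [Diagram.dim] at hCdim
        | step Cs Cc =>
          cases T with
          | base _ => simp [Diagram.dim] at hTdim
          | step Ts Tc =>
            obtain ⟨hel, hεS, -, -⟩ := he
            obtain ⟨hfl, hφC, -, -⟩ := hf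
            obtain ⟨a, e', rfl⟩ : ∃ a e', e = a :: e' := by
              cases e with
              | nil => simp at hel
              | cons a e' => exact ⟨a, e', rfl⟩
            obtain ⟨b, f', rfl⟩ : ∃ b f', f = b :: f' := by
              cases f with
              | nil => simp at hfl
              | cons b f' => exact ⟨b, f', rfl⟩
            simp only [Diagram.cells, List.headD_cons] at hεS hφC
            simp only [rewriteDiag, liftEmb, embComp, List.zipWith_cons_cons,
              Diagram.cells, List.headD_cons, List.tail_cons]
            congr 1
            have hb : (Bc.take b).length = b := by
              rw [List.length_take]; omega
            have key := take_mid_drop (Bc.take b)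
              (Ac.map (fun x => (x.1, List.zipWith (· + ·) f' x.2)))
              (Bc.drop (b + Cc.length))
              (Tc.map (fun x =>
                (x.1, List.zipWith (· + ·) (List.zipWith (· + ·) f' e') x.2)))
              a Sc.length (by simpa using hεS)
            rw [hb] at key
            rw [key]
            simp only [List.map_append, List.map_take, List.map_drop, List.map_map]
            simp [Function.comp_def, zipWith_add_assoc]

end QS
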